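/- Define F : ℝ³∖{0} → ℝ by F(w) = (w1² + 2√3 w1 w2 − w2² − 8 w3²) / (w1² + w2² + w3²)^{5/2}. Then for each of the three unit-sphere directions v ∈ { (0,0,1), (√3/2, 1/2, 0), (1/2, −√3/2, 0) } and each δ ∈ {L, −L} with L > 0, the gradient of F at the point 2δv is parallel to v; equivalently the cross product v × ∇F(2δv) = 0. Consequently each of the six points (x,y) = (δv, δv) ∈ ℝ³ × ℝ³ is an equilibrium of the reduced equations ẋ = 2 x × ∇_x 𝒦(x,y), ẏ = 2 y × ∇_y 𝒦(x,y), where 𝒦(x,y) = c·F(x+y) for any constant c. -/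

import Mathlib

open Real Matrix

/-- The function `F(w) = (w1² + 2√3 w1w2 − w2² − 8w3²)/‖w‖⁵` on `ℝ³∖{0}`. -/
noncomputable def F (w : Fin 3 → ℝ) : ℝ :=
  ((w 0) ^ 2 + 2 * Real.sqrt 3 * (w 0) * (w 1) - (w 1) ^ 2 - 8 * (w 2) ^ 2)
    / Real.sqrt (((w 0) ^ 2 + (w 1) ^ 2 + (w 2) ^ 2) ^ 5)

/-- Gradient of a function on `ℝ³` (vector of partial derivatives). -/
noncomputable def grad (f : (Fin 3 → ℝ) → ℝ) (w : Fin 3 → ℝ) : Fin 3 → ℝ :=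
  fun i => fderiv ℝ f w (Pi.single i 1)

lemma diffF {w : Fin 3 → ℝ} (h : 0 < w 0 ^ 2 + w 1 ^ 2 + w 2 ^ 2) : DifferentiableAt ℝ F w := by
  have h5 : (0:ℝ) < ((w 0)^2+(w 1)^2+(w 2)^2)^5 := by positivity
  have hne : Real.sqrt (((w 0)^2+(w 1)^2+(w 2)^2)^5) ≠ 0 := by positivity
  have hproj : ∀ j : Fin 3, DifferentiableAt ℝ (fun w : Fin 3 → ℝ => w j) w :=
    fun j => (ContinuousLinearMap.proj j : (Fin 3 → ℝ) →L[ℝ] ℝ).differentiableAt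
  have hnum : DifferentiableAt ℝ
      (fun w : Fin 3 → ℝ => w 0^2 + 2*Real.sqrt 3*w 0*w 1 - w 1^2 - 8*w 2^2) w :=
    ((((hproj 0).pow 2).add (((hproj 0).const_mul (2*Real.sqrt 3)).mul (hproj 1))).sub
      ((hproj 1).pow 2)).sub (((hproj 2).pow 2).const_mul 8)
  have hQ : DifferentiableAt ℝ (fun w : Fin 3 → ℝ => ((w 0)^2+(w 1)^2+(w 2)^2)^5) w :=
    ((((hproj 0).pow 2).add ((hproj 1).pow 2)).add ((hproj 2).pow 2)).pow 5
  have hden : DifferentiableAt ℝ (fun w : Fin 3 → ℝ => Real.sqrt (((w 0)^2+(w 1)^2+(w 2)^2)^5)) w :=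
    hQ.sqrt h5.ne'
  have key : DifferentiableAt ℝ (fun w : Fin 3 → ℝ =>
      (w 0^2 + 2*Real.sqrt 3*w 0*w 1 - w 1^2 - 8*w 2^2)
        * (Real.sqrt (((w 0)^2+(w 1)^2+(w 2)^2)^5))⁻¹) w := hnum.mul (hden.inv hne)
  unfold F
  simp only [div_eq_mul_inv]
  exact key


lemma hasDerivAt_div_sqrt5 {n q : ℝ → ℝ} {n' q' t nv Qv : ℝ}
    (hn : HasDerivAt n n' t) (hq : HasDerivAt q q' t)
    (hnv : n t = nv) (hQv : q t = Qv) (hpos : 0 < Qv) :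
    HasDerivAt (fun s => n s / Real.sqrt ((q s)^5))
      ((n' * Real.sqrt (Qv^5) - nv * (5*Qv^4*q'/(2*Real.sqrt (Qv^5))))/(Qv^5)) t := by
  subst hnv hQv
  have h5 : (0:ℝ) < (q t)^5 := by positivity
  have hs0 : Real.sqrt ((q t)^5) ≠ 0 := by positivity
  have hs : HasDerivAt (fun s => (q s)^5) ((5:ℕ) * (q t)^(5-1) * q') t := hq.pow 5
  have hsr : HasDerivAt (fun s => Real.sqrt ((q s)^5))
      (1/(2*Real.sqrt ((q t)^5)) * ((5:ℕ) * (q t)^(5-1) * q')) t := by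
    simpa [Function.comp_def] using (Real.hasDerivAt_sqrt h5.ne').comp t hs
  have := hn.div hsr hs0
  refine this.congr_deriv ?_
  rw [Real.sq_sqrt h5.le]
  push_cast
  ring


lemma sqrt5_alg (nd nv x Qv : ℝ) (hQ : 0 < Qv) :
    (nd * Real.sqrt (Qv^5) - nv * (5*Qv^4*(2*x)/(2*Real.sqrt (Qv^5))))/(Qv^5)
      = Real.sqrt Qv * (nd*Qv - 5*nv*x) / Qv^4 := by
  obtain ⟨r, hrpos, rfl⟩ : ∃ r : ℝ, 0 < r ∧ r^2 = Qv :=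
    ⟨Real.sqrt Qv, Real.sqrt_pos.mpr hQ, Real.sq_sqrt hQ.le⟩
  rw [show (r^2)^5 = (r^5)^2 by ring, Real.sqrt_sq (by positivity), Real.sqrt_sq hrpos.le]
  field_simp


lemma gradF' (w : Fin 3 → ℝ) (Qv Nv : ℝ)
    (hQ : w 0^2 + w 1^2 + w 2^2 = Qv)
    (hN : w 0^2 + 2*Real.sqrt 3*w 0*w 1 - w 1^2 - 8*w 2^2 = Nv)
    (hpos : 0 < Qv) (i : Fin 3) :
    grad F w i = Real.sqrt Qv *
      ((![2*w 0 + 2*Real.sqrt 3*w 1, 2*Real.sqrt 3*w 0 - 2*w 1, -16*w 2] i) * Qv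
        - 5*Nv*w i) / Qv^4 := by
  have hposw : 0 < w 0 ^ 2 + w 1 ^ 2 + w 2 ^ 2 := hQ ▸ hpos
  have hline : ∀ j : Fin 3, HasDerivAt (fun t : ℝ => w + t • (Pi.single j 1 : Fin 3 → ℝ)) (Pi.single j 1) 0 := by
    intro j
    simpa using ((hasDerivAt_id (0:ℝ)).smul_const (Pi.single j 1 : Fin 3 → ℝ)).const_add w
  have hfd : ∀ j : Fin 3, HasFDerivAt F (fderiv ℝ F w) (w + (0:ℝ) • (Pi.single j 1 : Fin 3 → ℝ)) := by
    intro j; simpa using (diffF hposw).hasFDerivAt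
  have hA : ∀ j : Fin 3, HasDerivAt (fun t : ℝ => F (w + t • (Pi.single j 1 : Fin 3 → ℝ)))
      (fderiv ℝ F w (Pi.single j 1)) 0 := by
    intro j
    simpa [Function.comp_def] using (hfd j).comp_hasDerivAt 0 (hline j)
  fin_cases i
  · -- i = 0
    have heq : (fun t : ℝ => F (w + t • (Pi.single (0:Fin 3) 1 : Fin 3 → ℝ)))
        = fun t => ((w 0 + t)^2 + 2*Real.sqrt 3*(w 0 + t)*w 1 - w 1^2 - 8*w 2^2)
          / Real.sqrt (((w 0 + t)^2 + w 1^2 + w 2^2)^5) := by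
      funext t
      simp [F, Pi.single_apply]
    have hid : HasDerivAt (fun t : ℝ => w 0 + t) 1 0 := (hasDerivAt_id 0).const_add (w 0)
    have hn : HasDerivAt (fun t => (w 0 + t)^2 + 2*Real.sqrt 3*(w 0 + t)*w 1 - w 1^2 - 8*w 2^2)
        (2*w 0 + 2*Real.sqrt 3*w 1) 0 := by
      have := (((hid.pow 2).add ((hid.const_mul (2*Real.sqrt 3)).mul_const (w 1))).sub_const
        (w 1^2)).sub_const (8*w 2^2)
      refine this.congr_deriv ?_
      push_cast; ring
    have hq : HasDerivAt (fun t => (w 0 + t)^2 + w 1^2 + w 2^2) (2*w 0) 0 := by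
      have := ((hid.pow 2).add_const (w 1^2)).add_const (w 2^2)
      refine this.congr_deriv ?_
      push_cast; ring
    have hB := hasDerivAt_div_sqrt5 (nv := Nv) (Qv := Qv) hn hq
      (by linear_combination hN) (by linear_combination hQ) hpos
    have hA0 := hA 0
    rw [heq] at hA0
    have hval := hA0.unique hB
    show fderiv ℝ F w (Pi.single (0:Fin 3) 1) = _
    rw [hval, show (5:ℝ)*Qv^4*(2*w 0) = 5*Qv^4*(2*(w 0)) from rfl, sqrt5_alg _ _ _ _ hpos]
    norm_num
  · -- i = 1
    have heq : (fun t : ℝ => F (w + t • (Pi.single (1:Fin 3) 1 : Fin 3 → ℝ)))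
        = fun t => (w 0^2 + 2*Real.sqrt 3*w 0*(w 1 + t) - (w 1 + t)^2 - 8*w 2^2)
          / Real.sqrt ((w 0^2 + (w 1 + t)^2 + w 2^2)^5) := by
      funext t
      simp [F, Pi.single_apply]
    have hid : HasDerivAt (fun t : ℝ => w 1 + t) 1 0 := (hasDerivAt_id 0).const_add (w 1)
    have hn : HasDerivAt (fun t => w 0^2 + 2*Real.sqrt 3*w 0*(w 1 + t) - (w 1 + t)^2 - 8*w 2^2)
        (2*Real.sqrt 3*w 0 - 2*w 1) 0 := by
      have := (((hasDerivAt_const (0:ℝ) (w 0^2)).add (hid.const_mul (2*Real.sqrt 3*w 0))).sub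
        (hid.pow 2)).sub_const (8*w 2^2)
      refine this.congr_deriv ?_
      push_cast; ring
    have hq : HasDerivAt (fun t => w 0^2 + (w 1 + t)^2 + w 2^2) (2*w 1) 0 := by
      have := ((hasDerivAt_const (0:ℝ) (w 0^2)).add (hid.pow 2)).add_const (w 2^2)
      refine this.congr_deriv ?_
      push_cast; ring
    have hB := hasDerivAt_div_sqrt5 (nv := Nv) (Qv := Qv) hn hq
      (by linear_combination hN) (by linear_combination hQ) hpos
    have hA1 := hA 1
    rw [heq] at hA1
    have hval := hA1.unique hB
    show fderiv ℝ F w (Pi.single (1:Fin 3) 1) = _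
    rw [hval, sqrt5_alg _ _ _ _ hpos]
    norm_num
  · -- i = 2
    have heq : (fun t : ℝ => F (w + t • (Pi.single (2:Fin 3) 1 : Fin 3 → ℝ)))
        = fun t => (w 0^2 + 2*Real.sqrt 3*w 0*w 1 - w 1^2 - 8*(w 2 + t)^2)
          / Real.sqrt ((w 0^2 + w 1^2 + (w 2 + t)^2)^5) := by
      funext t
      simp [F, Pi.single_apply]
    have hid : HasDerivAt (fun t : ℝ => w 2 + t) 1 0 := (hasDerivAt_id 0).const_add (w 2)
    have hn : HasDerivAt (fun t => w 0^2 + 2*Real.sqrt 3*w 0*w 1 - w 1^2 - 8*(w 2 + t)^2)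
        (-16*w 2) 0 := by
      have := (hasDerivAt_const (0:ℝ) (w 0^2 + 2*Real.sqrt 3*w 0*w 1 - w 1^2)).sub
        ((hid.pow 2).const_mul 8)
      refine this.congr_deriv ?_
      push_cast; ring
    have hq : HasDerivAt (fun t => w 0^2 + w 1^2 + (w 2 + t)^2) (2*w 2) 0 := by
      have := (hasDerivAt_const (0:ℝ) (w 0^2 + w 1^2)).add (hid.pow 2)
      refine this.congr_deriv ?_
      push_cast; ring
    have hB := hasDerivAt_div_sqrt5 (nv := Nv) (Qv := Qv) hn hq
      (by linear_combination hN) (by linear_combination hQ) hpos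
    have hA2 := hA 2
    rw [heq] at hA2
    have hval := hA2.unique hB
    show fderiv ℝ F w (Pi.single (2:Fin 3) 1) = _
    rw [hval, sqrt5_alg _ _ _ _ hpos]
    norm_num
    rfl


lemma grad_shift (c : ℝ) (a b : Fin 3 → ℝ) (h : DifferentiableAt ℝ F (b + a)) (i : Fin 3) :
    grad (fun x => c * F (x + a)) b i = c * grad F (b + a) i := by
  have h1 : HasFDerivAt (fun x : Fin 3 → ℝ => x + a)
      (ContinuousLinearMap.id ℝ (Fin 3 → ℝ)) b := (hasFDerivAt_id b).add_const a
  have h2 : HasFDerivAt (fun x : Fin 3 → ℝ => c * F (x + a))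
      (c • ((fderiv ℝ F (b + a)).comp (ContinuousLinearMap.id ℝ (Fin 3 → ℝ)))) b := by
    exact ((h.hasFDerivAt.comp b h1).const_mul c)
  rw [grad, h2.fderiv]
  simp [grad]


lemma grad_shift' (c : ℝ) (a b : Fin 3 → ℝ) (h : DifferentiableAt ℝ F (a + b)) (i : Fin 3) :
    grad (fun y => c * F (a + y)) b i = c * grad F (a + b) i := by
  have h1 : HasFDerivAt (fun y : Fin 3 → ℝ => a + y)
      (ContinuousLinearMap.id ℝ (Fin 3 → ℝ)) b := (hasFDerivAt_id b).const_add a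
  have h2 : HasFDerivAt (fun y : Fin 3 → ℝ => c * F (a + y))
      (c • ((fderiv ℝ F (a + b)).comp (ContinuousLinearMap.id ℝ (Fin 3 → ℝ)))) b := by
    exact ((h.hasFDerivAt.comp b h1).const_mul c)
  rw [grad, h2.fderiv]
  simp [grad]


lemma cross_parallel (u : Fin 3 → ℝ) (a b : ℝ) : crossProduct (a • u) (b • u) = 0 := by
  rw [_root_.map_smul, _root_.map_smul, LinearMap.smul_apply, cross_self]
  simp


lemma main_aux (δ : ℝ) (v : Fin 3 → ℝ) (μ : ℝ)
    (hdiff : DifferentiableAt ℝ F ((2*δ) • v))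
    (hgrad : grad F ((2*δ) • v) = μ • v) :
    crossProduct v (grad F ((2*δ) • v)) = 0 ∧
    ∀ c : ℝ,
      (2:ℝ) • crossProduct (δ • v) (grad (fun x => c * F (x + δ • v)) (δ • v)) = 0 ∧
      (2:ℝ) • crossProduct (δ • v) (grad (fun y => c * F (δ • v + y)) (δ • v)) = 0 := by
  have hsum : δ • v + δ • v = (2*δ) • v := by
    rw [← add_smul]; congr 1; ring
  constructor
  · rw [hgrad, _root_.map_smul, cross_self, smul_zero]
  · intro c
    have hd : DifferentiableAt ℝ F (δ • v + δ • v) := by rw [hsum]; exact hdiff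
    have hx : grad (fun x => c * F (x + δ • v)) (δ • v) = (c*μ) • v := by
      funext i
      rw [grad_shift c (δ • v) (δ • v) hd i, hsum, hgrad]
      simp [mul_assoc]
    have hy : grad (fun y => c * F (δ • v + y)) (δ • v) = (c*μ) • v := by
      funext i
      rw [grad_shift' c (δ • v) (δ • v) hd i, hsum, hgrad]
      simp [mul_assoc]
    rw [hx, hy]
    exact ⟨by rw [cross_parallel, smul_zero], by rw [cross_parallel, smul_zero]⟩

/-- For each of the three unit directions `v` and each `δ = ±L`, the gradient
of `F` at `2δv` is parallel to `v` (their cross product vanishes); consequently each point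
`(x,y) = (δv, δv)` is an equilibrium of `ẋ = 2x × ∇ₓ𝒦`, `ẏ = 2y × ∇_y𝒦` for
`𝒦(x,y) = c·F(x+y)` with any constant `c`. -/
theorem six_relative_equilibria (L : ℝ) (hL : 0 < L) (v : Fin 3 → ℝ)
    (hv : v = ![0, 0, 1] ∨ v = ![Real.sqrt 3 / 2, 1 / 2, 0] ∨
      v = ![1 / 2, -(Real.sqrt 3) / 2, 0])
    (δ : ℝ) (hδ : δ = L ∨ δ = -L) :
    crossProduct v (grad F ((2 * δ) • v)) = 0 ∧
    ∀ c : ℝ,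
      (2 : ℝ) • crossProduct (δ • v) (grad (fun x => c * F (x + δ • v)) (δ • v)) = 0 ∧
      (2 : ℝ) • crossProduct (δ • v) (grad (fun y => c * F (δ • v + y)) (δ • v)) = 0 := by
  have hδ2 : 0 < δ^2 := by
    have hL2 : 0 < L^2 := pow_pos hL 2
    rcases hδ with rfl | rfl
    · exact hL2
    · simpa using hL2
  have hQpos : 0 < 4*δ^2 := by linarith
  have hs2 : Real.sqrt 3 ^ 2 = 3 := Real.sq_sqrt (by norm_num)
  rcases hv with rfl | rfl | rfl
  · -- v = ![0,0,1]
    have hQ2 : ((2*δ) • ![(0:ℝ),0,1]) 0 ^ 2 + ((2*δ) • ![(0:ℝ),0,1]) 1 ^ 2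
        + ((2*δ) • ![(0:ℝ),0,1]) 2 ^ 2 = 4*δ^2 := by
      simp [Pi.smul_apply]; ring
    have hN2 : ((2*δ) • ![(0:ℝ),0,1]) 0 ^ 2
        + 2*Real.sqrt 3*(((2*δ) • ![(0:ℝ),0,1]) 0)*(((2*δ) • ![(0:ℝ),0,1]) 1)
        - ((2*δ) • ![(0:ℝ),0,1]) 1 ^ 2 - 8*((2*δ) • ![(0:ℝ),0,1]) 2 ^ 2 = -32*δ^2 := by
      simp [Pi.smul_apply]; ring
    refine main_aux δ _ (Real.sqrt (4*δ^2) * (192*δ^3) / (4*δ^2)^4)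
      (diffF (by rw [hQ2]; exact hQpos)) ?_
    funext i
    rw [gradF' _ (4*δ^2) (-32*δ^2) hQ2 hN2 hQpos i]
    generalize Real.sqrt (4*δ^2) = r
    fin_cases i <;> simp <;>
      first
      | ring1
      | linear_combination (r*8*δ^3/(4*δ^2)^4) * hs2
      | linear_combination (-(r*8*δ^3/(4*δ^2)^4)) * hs2
  · -- v = ![√3/2, 1/2, 0]
    have hQ2 : ((2*δ) • ![Real.sqrt 3/2, (1:ℝ)/2, 0]) 0 ^ 2
        + ((2*δ) • ![Real.sqrt 3/2, (1:ℝ)/2, 0]) 1 ^ 2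
        + ((2*δ) • ![Real.sqrt 3/2, (1:ℝ)/2, 0]) 2 ^ 2 = 4*δ^2 := by
      simp [Pi.smul_apply]; linear_combination δ^2 * hs2
    have hN2 : ((2*δ) • ![Real.sqrt 3/2, (1:ℝ)/2, 0]) 0 ^ 2
        + 2*Real.sqrt 3*(((2*δ) • ![Real.sqrt 3/2, (1:ℝ)/2, 0]) 0)*(((2*δ) • ![Real.sqrt 3/2, (1:ℝ)/2, 0]) 1)
        - ((2*δ) • ![Real.sqrt 3/2, (1:ℝ)/2, 0]) 1 ^ 2
        - 8*((2*δ) • ![Real.sqrt 3/2, (1:ℝ)/2, 0]) 2 ^ 2 = 8*δ^2 := by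
      simp [Pi.smul_apply]; linear_combination 3*δ^2 * hs2
    refine main_aux δ _ (Real.sqrt (4*δ^2) * (-48*δ^3) / (4*δ^2)^4)
      (diffF (by rw [hQ2]; exact hQpos)) ?_
    funext i
    rw [gradF' _ (4*δ^2) (8*δ^2) hQ2 hN2 hQpos i]
    generalize Real.sqrt (4*δ^2) = r
    fin_cases i <;> simp <;>
      first
      | ring1
      | linear_combination (r*8*δ^3/(4*δ^2)^4) * hs2
      | linear_combination (-(r*8*δ^3/(4*δ^2)^4)) * hs2
  · -- v = ![1/2, -√3/2, 0]
    have hQ2 : ((2*δ) • ![(1:ℝ)/2, -(Real.sqrt 3)/2, 0]) 0 ^ 2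
        + ((2*δ) • ![(1:ℝ)/2, -(Real.sqrt 3)/2, 0]) 1 ^ 2
        + ((2*δ) • ![(1:ℝ)/2, -(Real.sqrt 3)/2, 0]) 2 ^ 2 = 4*δ^2 := by
      simp [Pi.smul_apply]; linear_combination δ^2 * hs2
    have hN2 : ((2*δ) • ![(1:ℝ)/2, -(Real.sqrt 3)/2, 0]) 0 ^ 2
        + 2*Real.sqrt 3*(((2*δ) • ![(1:ℝ)/2, -(Real.sqrt 3)/2, 0]) 0)*(((2*δ) • ![(1:ℝ)/2, -(Real.sqrt 3)/2, 0]) 1)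
        - ((2*δ) • ![(1:ℝ)/2, -(Real.sqrt 3)/2, 0]) 1 ^ 2
        - 8*((2*δ) • ![(1:ℝ)/2, -(Real.sqrt 3)/2, 0]) 2 ^ 2 = -8*δ^2 := by
      simp [Pi.smul_apply]; linear_combination (-3*δ^2) * hs2
    refine main_aux δ _ (Real.sqrt (4*δ^2) * (48*δ^3) / (4*δ^2)^4)
      (diffF (by rw [hQ2]; exact hQpos)) ?_
    funext i
    rw [gradF' _ (4*δ^2) (-8*δ^2) hQ2 hN2 hQpos i]
    generalize Real.sqrt (4*δ^2) = r
    fin_cases i <;> simp <;>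
      first
      | ring1
      | linear_combination (r*8*δ^3/(4*δ^2)^4) * hs2
      | linear_combination (-(r*8*δ^3/(4*δ^2)^4)) * hs2
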